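/- Consider functions P, S, V, W : ℝ → ℝ that are differentiable on [0,∞) and satisfy for all t ≥ 0 the system P' = s(1 - P/L)P - aPS, S' = r(1 - S/K)S - bPS - λVS - βWS + ψV + φW, V' = λVS - ψV - μV - ePV, W' = βWS - φW - νW - fPW. If for all t ≥ 0 one has 0 ≤ P(t) ≤ L, 0 ≤ S(t) ≤ K, V(t) ≥ 0 and W(t) ≥ 0, then the trajectories are bounded: there exists M ∈ ℝ such that P(t) + S(t) + V(t) + W(t) ≤ M for all t ≥ 0. -/

import Mathlib

/-- Boundedness of trajectories of the two-strain ecoepidemic competition model: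
if `P, S, V, W` solve the system on `[0, ∞)`, with `0 ≤ P ≤ L`, `0 ≤ S ≤ K`,
`V ≥ 0`, `W ≥ 0` there, then the total population `P + S + V + W` is bounded. -/
theorem boundedness_of_trajectories
    (s L a r K b lam beta psi phi mu nu e f : ℝ)
    (hs : 0 < s) (hL : 0 < L) (ha : 0 < a) (hr : 0 < r) (hK : 0 < K) (hb : 0 < b)
    (hlam : 0 < lam) (hbeta : 0 < beta) (hpsi : 0 < psi) (hphi : 0 < phi)
    (hmu : 0 < mu) (hnu : 0 < nu) (he : 0 < e) (hf : 0 < f)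
    (P S V W : ℝ → ℝ)
    (hP : ∀ t ∈ Set.Ici (0 : ℝ),
      HasDerivWithinAt P (s * (1 - P t / L) * P t - a * P t * S t) (Set.Ici 0) t)
    (hS : ∀ t ∈ Set.Ici (0 : ℝ),
      HasDerivWithinAt S
        (r * (1 - S t / K) * S t - b * P t * S t - lam * V t * S t - beta * W t * S t
          + psi * V t + phi * W t) (Set.Ici 0) t)
    (hV : ∀ t ∈ Set.Ici (0 : ℝ),
      HasDerivWithinAt V (lam * V t * S t - psi * V t - mu * V t - e * P t * V t)
        (Set.Ici 0) t)
    (hW : ∀ t ∈ Set.Ici (0 : ℝ),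
      HasDerivWithinAt W (beta * W t * S t - phi * W t - nu * W t - f * P t * W t)
        (Set.Ici 0) t)
    (hPbd : ∀ t ∈ Set.Ici (0 : ℝ), 0 ≤ P t ∧ P t ≤ L)
    (hSbd : ∀ t ∈ Set.Ici (0 : ℝ), 0 ≤ S t ∧ S t ≤ K)
    (hVpos : ∀ t ∈ Set.Ici (0 : ℝ), 0 ≤ V t)
    (hWpos : ∀ t ∈ Set.Ici (0 : ℝ), 0 ≤ W t) :
    ∃ M : ℝ, ∀ t ∈ Set.Ici (0 : ℝ), P t + S t + V t + W t ≤ M := by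
  set c : ℝ := min mu nu with hc
  have hcpos : 0 < c := lt_min hmu hnu
  set N : ℝ → ℝ := fun t => S t + V t + W t with hN
  set N' : ℝ → ℝ := fun t =>
    r * (1 - S t / K) * S t - b * P t * S t - mu * V t - nu * W t
      - e * P t * V t - f * P t * W t with hN'
  have hNderiv : ∀ x ∈ Set.Ici (0 : ℝ), HasDerivWithinAt N (N' x) (Set.Ici 0) x := by
    intro x hx
    have := ((hS x hx).add (hV x hx)).add (hW x hx)
    refine this.congr_deriv ?_
    simp only [hN']
    ring
  set δ : ℝ := N 0 with hδdef
  have hδ : 0 ≤ δ := by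
    have h0 : (0 : ℝ) ∈ Set.Ici (0 : ℝ) := Set.self_mem_Ici
    have := (hSbd 0 h0).1
    have := hVpos 0 h0
    have := hWpos 0 h0
    simp only [hδdef, hN]; linarith
  set ε : ℝ := r * K + c * K with hεdef
  have hε : 0 ≤ ε := by positivity
  refine ⟨L + (δ + ε / c), ?_⟩
  intro t ht
  -- apply Gronwall on [0, t]
  have hbound : ∀ x ∈ Set.Ico (0 : ℝ) t, N' x ≤ (-c) * N x + ε := by
    intro x hx
    have hx' : x ∈ Set.Ici (0 : ℝ) := hx.1
    obtain ⟨hP0, hPL⟩ := hPbd x hx'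
    obtain ⟨hS0, hSK⟩ := hSbd x hx'
    have hV0 := hVpos x hx'
    have hW0 := hWpos x hx'
    have hdivnn : 0 ≤ S x / K := div_nonneg hS0 hK.le
    have hcmu : c ≤ mu := min_le_left _ _
    have hcnu : c ≤ nu := min_le_right _ _
    simp only [hN', hN, hεdef]
    nlinarith [mul_nonneg (mul_nonneg hr.le hdivnn) hS0,
      mul_nonneg (mul_nonneg hb.le hP0) hS0,
      mul_nonneg (mul_nonneg he.le hP0) hV0,
      mul_nonneg (mul_nonneg hf.le hP0) hW0,
      mul_nonneg hcpos.le hV0, mul_nonneg hcpos.le hW0]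
  have hcont : ContinuousOn N (Set.Icc 0 t) := by
    intro x hx
    exact ((hNderiv x hx.1).continuousWithinAt).mono (fun y hy => hy.1)
  have hderiv' : ∀ x ∈ Set.Ico (0 : ℝ) t, HasDerivWithinAt N (N' x) (Set.Ici x) x :=
    fun x hx => (hNderiv x hx.1).mono (Set.Ici_subset_Ici.2 hx.1)
  have hG := le_gronwallBound_of_liminf_deriv_right_le hcont
    (fun x hx _r hr => (hderiv' x hx).liminf_right_slope_le hr)
    (le_refl δ) hbound t (Set.right_mem_Icc.2 ht)
  clear_value c N N' δ ε
  have hGB : gronwallBound δ (-c) ε (t - 0) ≤ δ + ε / c := by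
    rw [gronwallBound_of_K_ne_0 (by linarith : (-c : ℝ) ≠ 0)]
    have hexple : Real.exp (-c * (t - 0)) ≤ 1 := by
      apply Real.exp_le_one_iff.2
      have : 0 ≤ c * t := mul_nonneg hcpos.le ht
      simp only [sub_zero]; nlinarith
    have hexppos : 0 < Real.exp (-c * (t - 0)) := Real.exp_pos _
    have hεc : 0 ≤ ε / c := div_nonneg hε hcpos.le
    rw [div_neg]
    beta_reduce
    have h1 : δ * Real.exp (-c * (t - 0)) ≤ δ := by nlinarith
    have h2 : -(ε / c) * (Real.exp (-c * (t - 0)) - 1) ≤ ε / c := by nlinarith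
    linarith
  have hNt : N t ≤ δ + ε / c := le_trans hG hGB
  have hPL := (hPbd t ht).2
  simp only [hN] at hNt
  linarith
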